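/- Let H be a free abelian group of rank 2g equipped with a nondegenerate alternating bilinear form (a symplectic Z-module), and let x be a primitive vector in H. Let i : H → ∧³H be the map h ↦ h ∧ ω, where ω is the canonical element associated to a symplectic basis. Then the intersection of ∧³(x^⊥) with i(H) inside ∧³H equals the infinite cyclic subgroup generated by i(x). -/

import Mathlib

open ExteriorAlgebra

/-- Build an alternating 3-form from an explicit trilinear function. -/
def alt3 {H : Type} [AddCommGroup H] [Module ℤ H] (T : H → H → H → ℤ)
    (ha1 : ∀ u u' v w, T (u + u') v w = T u v w + T u' v w)
    (ha2 : ∀ u v v' w, T u (v + v') w = T u v w + T u v' w)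
    (ha3 : ∀ u v w w', T u v (w + w') = T u v w + T u v w')
    (hs1 : ∀ (c : ℤ) u v w, T (c • u) v w = c * T u v w)
    (hs2 : ∀ (c : ℤ) u v w, T u (c • v) w = c * T u v w)
    (hs3 : ∀ (c : ℤ) u v w, T u v (c • w) = c * T u v w)
    (h12 : ∀ u w, T u u w = 0)
    (h23 : ∀ u v, T u v v = 0)
    (h13 : ∀ u v, T u v u = 0) :
    H [⋀^(Fin 3)]→ₗ[ℤ] ℤ where
  toFun v := T (v 0) (v 1) (v 2)
  map_update_add' := by
    intro dec m i a b
    have hd : dec = instDecidableEqFin 3 := Subsingleton.elim _ _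
    subst hd
    fin_cases i <;>
      simp [Function.update_apply, show ((1:Fin 3) ≠ 0) from by decide,
        show ((2:Fin 3) ≠ 0) from by decide, show ((0:Fin 3) ≠ 1) from by decide,
        show ((2:Fin 3) ≠ 1) from by decide, show ((0:Fin 3) ≠ 2) from by decide,
        show ((1:Fin 3) ≠ 2) from by decide, ha1, ha2, ha3]
  map_update_smul' := by
    intro dec m i c a
    have hd : dec = instDecidableEqFin 3 := Subsingleton.elim _ _
    subst hd
    simp only [← Int.cast_smul_eq_zsmul ℤ, Int.cast_id] at hs1 hs2 hs3
    fin_cases i <;>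
      simp [Function.update_apply, show ((1:Fin 3) ≠ 0) from by decide,
        show ((2:Fin 3) ≠ 0) from by decide, show ((0:Fin 3) ≠ 1) from by decide,
        show ((2:Fin 3) ≠ 1) from by decide, show ((0:Fin 3) ≠ 2) from by decide,
        show ((1:Fin 3) ≠ 2) from by decide] <;>
      first | rw [hs1] | rw [hs2] | rw [hs3]
  map_eq_zero_of_eq' := by
    intro v i j hv hij
    fin_cases i <;> fin_cases j <;> simp_all

@[simp] lemma alt3_apply {H : Type} [AddCommGroup H] [Module ℤ H] (T : H → H → H → ℤ)
    (ha1 ha2 ha3 hs1 hs2 hs3 h12 h23 h13) (v : Fin 3 → H) :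
    alt3 T ha1 ha2 ha3 hs1 hs2 hs3 h12 h23 h13 v = T (v 0) (v 1) (v 2) := rfl

lemma lift3_eval {H : Type} [AddCommGroup H] [Module ℤ H] (M : H [⋀^(Fin 3)]→ₗ[ℤ] ℤ)
    (u v w : H) :
    liftAlternating (R := ℤ) (M := H) (N := ℤ)
      (Function.update (fun n => (0 : H [⋀^(Fin n)]→ₗ[ℤ] ℤ)) 3 M)
      (ι ℤ u * ι ℤ v * ι ℤ w) = M ![u, v, w] := by
  have h1 : ι ℤ u * ι ℤ v * ι ℤ w = ιMulti ℤ 3 ![u, v, w] := by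
    simp [ιMulti_apply, mul_assoc]
  rw [h1, liftAlternating_apply_ιMulti, Function.update_self]


set_option maxHeartbeats 1600000

/-- For a symplectic `ℤ`-module `H` of rank `2g` with symplectic basis
`e`, canonical element `ω` and standard embedding `iH : h ↦ h ∧ ω`, and a primitive
vector `x`, the intersection of `∧³(x^⊥)` with `iH(H)` inside `∧³H` is the cyclic
subgroup generated by `iH x`. -/
theorem johnson_linear_algebra_primitive (g : ℕ) (hg : 1 ≤ g)
    (H : Type) [AddCommGroup H] [Module ℤ H]
    (e : Module.Basis (Fin g ⊕ Fin g) ℤ H)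
    (B : H →ₗ[ℤ] H →ₗ[ℤ] ℤ)
    (hBab : ∀ i j : Fin g, B (e (Sum.inl i)) (e (Sum.inr j)) = if i = j then 1 else 0)
    (hBaa : ∀ i j : Fin g, B (e (Sum.inl i)) (e (Sum.inl j)) = 0)
    (hBbb : ∀ i j : Fin g, B (e (Sum.inr i)) (e (Sum.inr j)) = 0)
    (hBalt : ∀ u : H, B u u = 0)
    (x : H) (hx : ∃ f : H →ₗ[ℤ] ℤ, f x = 1)
    (ω : ExteriorAlgebra ℤ H)
    (hω : ω = ∑ i : Fin g, ι ℤ (e (Sum.inl i)) * ι ℤ (e (Sum.inr i)))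
    (iH : H →ₗ[ℤ] ExteriorAlgebra ℤ H)
    (hiH : ∀ h : H, iH h = ι ℤ h * ω) :
    (Submodule.span ℤ {z : ExteriorAlgebra ℤ H |
        ∃ u v w : H, B x u = 0 ∧ B x v = 0 ∧ B x w = 0 ∧
          z = ι ℤ u * ι ℤ v * ι ℤ w}) ⊓ LinearMap.range iH
      = Submodule.span ℤ {iH x} := by
  classical
  -- skew symmetry
  have skew : ∀ u v : H, B u v = - B v u := by
    intro u v
    have h := hBalt (u + v)
    simp only [map_add, LinearMap.add_apply, hBalt] at h
    linarith
  have hBba : ∀ i j : Fin g, B (e (Sum.inr i)) (e (Sum.inl j)) =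
      - (if j = i then 1 else 0) := by
    intro i j
    rw [skew, hBab]
  -- coordinate lemmas
  have cl : ∀ (h : H) (j : Fin g), e.repr h (Sum.inl j) = B h (e (Sum.inr j)) := by
    intro h j
    have hmap : e.coord (Sum.inl j) = B.flip (e (Sum.inr j)) := by
      apply e.ext
      intro m
      rcases m with i | i <;>
        simp [Module.Basis.coord_apply, Module.Basis.repr_self, Finsupp.single_apply,
          LinearMap.flip_apply, hBab, hBbb]
    rw [← Module.Basis.coord_apply, hmap, LinearMap.flip_apply]
  have cr : ∀ (h : H) (j : Fin g), e.repr h (Sum.inr j) = - B h (e (Sum.inl j)) := by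
    intro h j
    have hmap : e.coord (Sum.inr j) = - B.flip (e (Sum.inl j)) := by
      apply e.ext
      intro m
      rcases m with i | i <;>
        simp [Module.Basis.coord_apply, Module.Basis.repr_self, Finsupp.single_apply,
          LinearMap.flip_apply, hBaa, hBba, eq_comm]
    rw [← Module.Basis.coord_apply, hmap]
    simp [LinearMap.flip_apply]
  -- expansion in the symplectic basis
  have EXP : ∀ h : H,
      h = ∑ i, B h (e (Sum.inr i)) • e (Sum.inl i)
            - ∑ i, B h (e (Sum.inl i)) • e (Sum.inr i) := by
    intro h
    simp only [← Int.cast_smul_eq_zsmul ℤ, Int.cast_id]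
    conv_lhs => rw [← e.sum_repr h]
    rw [Fintype.sum_sum_type]
    rw [sub_eq_add_neg, ← Finset.sum_neg_distrib]
    congr 1
    · exact Finset.sum_congr rfl fun i _ => by rw [cl h i]
    · exact Finset.sum_congr rfl fun i _ => by rw [cr h i, neg_smul]
  -- key contraction identity
  have KEY : ∀ p q : H,
      ∑ i, (B p (e (Sum.inl i)) * B q (e (Sum.inr i))
            - B p (e (Sum.inr i)) * B q (e (Sum.inl i))) = B p q := by
    intro p q
    have hL : (∑ i, (B p (e (Sum.inl i)) • B.flip (e (Sum.inr i))
        - B p (e (Sum.inr i)) • B.flip (e (Sum.inl i))) : H →ₗ[ℤ] ℤ) = B p := by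
      apply e.ext
      intro m
      rcases m with j | j <;>
        simp [LinearMap.sum_apply, LinearMap.sub_apply, LinearMap.smul_apply,
          LinearMap.flip_apply, hBab, hBaa, hBbb, hBba, smul_eq_mul,
          mul_ite, ite_mul, Finset.sum_ite_eq, Finset.sum_ite_eq', eq_comm]
    have := LinearMap.congr_fun hL q
    simpa [LinearMap.sum_apply, LinearMap.sub_apply, LinearMap.smul_apply,
      LinearMap.flip_apply, smul_eq_mul] using this
  -- a vector dual to x
  obtain ⟨f, hf⟩ := hx
  set y : H := ∑ i, f (e (Sum.inl i)) • e (Sum.inr i)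
      - ∑ i, f (e (Sum.inr i)) • e (Sum.inl i) with hy
  have hBy : ∀ z : H, B z y = f z := by
    intro z
    have h1 : B z y = f (∑ i, B z (e (Sum.inr i)) • e (Sum.inl i)
        - ∑ i, B z (e (Sum.inl i)) • e (Sum.inr i)) := by
      rw [hy]
      simp only [map_sub, map_sum, ← Int.cast_smul_eq_zsmul ℤ, Int.cast_id,
        map_smul, smul_eq_mul]
      simp only [Int.cast_id, smul_eq_mul]
      congr 1 <;> exact Finset.sum_congr rfl fun i _ => mul_comm _ _
    rw [h1, ← EXP z]
  have hxy : B x y = 1 := by rw [hBy, hf]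
  -- the mu functional
  have hmu : ∀ h : H,
      iH h ∈ Submodule.span ℤ {z : ExteriorAlgebra ℤ H |
        ∃ u v w : H, B x u = 0 ∧ B x v = 0 ∧ B x w = 0 ∧
          z = ι ℤ u * ι ℤ v * ι ℤ w} →
      (g : ℤ) * B x h - B x h = 0 := by
    intro h hmem
    set M : H [⋀^(Fin 3)]→ₗ[ℤ] ℤ := alt3
      (fun u v w => B x u * B v w + B x v * B w u + B x w * B u v)
      (by intros; beta_reduce; simp only [map_add, LinearMap.add_apply]; ring)
      (by intros; beta_reduce; simp only [map_add, LinearMap.add_apply]; ring)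
      (by intros; beta_reduce; simp only [map_add, LinearMap.add_apply]; ring)
      (by intros; beta_reduce; simp only [← Int.cast_smul_eq_zsmul ℤ, Int.cast_id, map_smul,
            LinearMap.smul_apply, smul_eq_mul]; simp only [Int.cast_id, smul_eq_mul]; ring)
      (by intros; beta_reduce; simp only [← Int.cast_smul_eq_zsmul ℤ, Int.cast_id, map_smul,
            LinearMap.smul_apply, smul_eq_mul]; simp only [Int.cast_id, smul_eq_mul]; ring)
      (by intros; beta_reduce; simp only [← Int.cast_smul_eq_zsmul ℤ, Int.cast_id, map_smul,
            LinearMap.smul_apply, smul_eq_mul]; simp only [Int.cast_id, smul_eq_mul]; ring)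
      (by intro u w; beta_reduce; rw [skew w u, hBalt u]; ring)
      (by intro u v; beta_reduce; rw [skew v u, hBalt v]; ring)
      (by intro u v; beta_reduce; rw [skew v u, hBalt u]; ring) with hM
    set F := liftAlternating (R := ℤ) (M := H) (N := ℤ)
      (Function.update (fun n => (0 : H [⋀^(Fin n)]→ₗ[ℤ] ℤ)) 3 M) with hF
    have hker : F (iH h) = 0 := by
      have hle : Submodule.span ℤ {z : ExteriorAlgebra ℤ H |
          ∃ u v w : H, B x u = 0 ∧ B x v = 0 ∧ B x w = 0 ∧
            z = ι ℤ u * ι ℤ v * ι ℤ w} ≤ LinearMap.ker F := by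
        refine Submodule.span_le.mpr ?_
        rintro z ⟨u, v, w, hu, hv, hw, rfl⟩
        change F (ι ℤ u * ι ℤ v * ι ℤ w) = 0
        simp only [SetLike.mem_coe, LinearMap.mem_ker, hF, lift3_eval, hM, alt3_apply]
        show B x u * B v w + B x v * B w u + B x w * B u v = 0
        rw [hu, hv, hw]; ring
      exact hle hmem
    have hcomp : F (iH h) = (g : ℤ) * B x h - B x h := by
      rw [hiH, hω, Finset.mul_sum, map_sum]
      have hterm : ∀ i : Fin g,
          F (ι ℤ h * (ι ℤ (e (Sum.inl i)) * ι ℤ (e (Sum.inr i))))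
          = B x h + (B x (e (Sum.inr i)) * B h (e (Sum.inl i))
              - B x (e (Sum.inl i)) * B h (e (Sum.inr i))) := by
        intro i
        rw [← mul_assoc, hF, lift3_eval, hM]
        have h1 : B (e (Sum.inl i)) (e (Sum.inr i)) = 1 := by rw [hBab]; simp
        simp only [alt3_apply]
        show B x h * B (e (Sum.inl i)) (e (Sum.inr i))
            + B x (e (Sum.inl i)) * B (e (Sum.inr i)) h
            + B x (e (Sum.inr i)) * B h (e (Sum.inl i)) = _
        rw [h1, skew (e (Sum.inr i)) h]
        ring
      rw [Finset.sum_congr rfl fun i _ => hterm i, Finset.sum_add_distrib,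
        Finset.sum_const, Finset.card_univ, Fintype.card_fin]
      have hs2 : ∑ i, (B x (e (Sum.inr i)) * B h (e (Sum.inl i))
          - B x (e (Sum.inl i)) * B h (e (Sum.inr i))) = - B x h := by
        rw [← KEY x h, ← Finset.sum_neg_distrib]
        exact Finset.sum_congr rfl fun i _ => by ring
      rw [hs2]
      simp only [nsmul_eq_mul]
      ring
    rw [hcomp] at hker
    exact hker
  -- the G functionals
  have hG : ∀ z h : H,
      iH h ∈ Submodule.span ℤ {z : ExteriorAlgebra ℤ H |
        ∃ u v w : H, B x u = 0 ∧ B x v = 0 ∧ B x w = 0 ∧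
          z = ι ℤ u * ι ℤ v * ι ℤ w} →
      B x h * B z y - B z h + B y h * B x z = 0 := by
    intro z h hmem
    set M : H [⋀^(Fin 3)]→ₗ[ℤ] ℤ := alt3
      (fun u v w => B x u * (B z v * B y w - B z w * B y v)
        - B z u * (B x v * B y w - B x w * B y v)
        + B y u * (B x v * B z w - B x w * B z v))
      (by intros; beta_reduce; simp only [map_add, LinearMap.add_apply]; ring)
      (by intros; beta_reduce; simp only [map_add, LinearMap.add_apply]; ring)
      (by intros; beta_reduce; simp only [map_add, LinearMap.add_apply]; ring)
      (by intros; beta_reduce; simp only [← Int.cast_smul_eq_zsmul ℤ, Int.cast_id, map_smul,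
            LinearMap.smul_apply, smul_eq_mul]; simp only [Int.cast_id, smul_eq_mul]; ring)
      (by intros; beta_reduce; simp only [← Int.cast_smul_eq_zsmul ℤ, Int.cast_id, map_smul,
            LinearMap.smul_apply, smul_eq_mul]; simp only [Int.cast_id, smul_eq_mul]; ring)
      (by intros; beta_reduce; simp only [← Int.cast_smul_eq_zsmul ℤ, Int.cast_id, map_smul,
            LinearMap.smul_apply, smul_eq_mul]; simp only [Int.cast_id, smul_eq_mul]; ring)
      (by intros; beta_reduce; ring)
      (by intros; beta_reduce; ring)
      (by intros; beta_reduce; ring) with hM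
    set F := liftAlternating (R := ℤ) (M := H) (N := ℤ)
      (Function.update (fun n => (0 : H [⋀^(Fin n)]→ₗ[ℤ] ℤ)) 3 M) with hF
    have hker : F (iH h) = 0 := by
      have hle : Submodule.span ℤ {z : ExteriorAlgebra ℤ H |
          ∃ u v w : H, B x u = 0 ∧ B x v = 0 ∧ B x w = 0 ∧
            z = ι ℤ u * ι ℤ v * ι ℤ w} ≤ LinearMap.ker F := by
        refine Submodule.span_le.mpr ?_
        rintro t ⟨u, v, w, hu, hv, hw, rfl⟩
        change F (ι ℤ u * ι ℤ v * ι ℤ w) = 0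
        simp only [SetLike.mem_coe, LinearMap.mem_ker, hF, lift3_eval, hM, alt3_apply]
        show B x u * (B z v * B y w - B z w * B y v)
          - B z u * (B x v * B y w - B x w * B y v)
          + B y u * (B x v * B z w - B x w * B z v) = 0
        rw [hu, hv, hw]; ring
      exact hle hmem
    have hcomp : F (iH h) = B x h * B z y - B z h + B y h * B x z := by
      rw [hiH, hω, Finset.mul_sum, map_sum]
      have hterm : ∀ i : Fin g,
          F (ι ℤ h * (ι ℤ (e (Sum.inl i)) * ι ℤ (e (Sum.inr i))))
          = B x h * (B z (e (Sum.inl i)) * B y (e (Sum.inr i))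
              - B z (e (Sum.inr i)) * B y (e (Sum.inl i)))
            - B z h * (B x (e (Sum.inl i)) * B y (e (Sum.inr i))
              - B x (e (Sum.inr i)) * B y (e (Sum.inl i)))
            + B y h * (B x (e (Sum.inl i)) * B z (e (Sum.inr i))
              - B x (e (Sum.inr i)) * B z (e (Sum.inl i))) := by
        intro i
        rw [← mul_assoc, hF, lift3_eval, hM]
        rfl
      rw [Finset.sum_congr rfl fun i _ => hterm i]
      have split : ∀ (a b c : Fin g → ℤ),
          ∑ i, (B x h * a i - B z h * b i + B y h * c i)
            = B x h * (∑ i, a i) - B z h * (∑ i, b i) + B y h * (∑ i, c i) := by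
        intro a b c
        rw [Finset.mul_sum, Finset.mul_sum, Finset.mul_sum, ← Finset.sum_sub_distrib,
          ← Finset.sum_add_distrib]
      rw [split, KEY z y, KEY x y, KEY x z, hxy]
      ring
    rw [hcomp] at hker
    exact hker
  -- anticommutation facts
  have anti : ∀ a b : H, ι ℤ a * ι ℤ b + ι ℤ b * ι ℤ a = 0 := fun a b =>
    ι_add_mul_swap a b
  have key2 : ∀ p q r s : ExteriorAlgebra ℤ H, q * s + s * q = 0 → s * s = 0 →
      ∀ α β : ℤ, p * (q - α • s) * (r - β • s)
        = p * q * r + (p * s) * (β • q - α • r) := by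
    intro p q r s hqs hss α β
    have expand : p * (q - α • s) * (r - β • s)
        - (p * q * r + (p * s) * (β • q - α • r))
        = (-(β • (p * (q * s + s * q)))) + (α * β) • (p * (s * s)) := by
      noncomm_ring
      module
    rw [hqs, hss] at expand
    simp only [mul_zero, smul_zero, add_zero, neg_zero] at expand
    exact sub_eq_zero.mp expand
  apply le_antisymm
  · rintro t ⟨hts, hrange⟩
    obtain ⟨h, rfl⟩ := hrange
    -- from the G functionals: h - B x h • y + B y h • x pairs to zero with everything
    have hzero : ∀ z : H, B z (h - B x h • y + B y h • x) = 0 := by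
      intro z
      have h1 := hG z h hts
      simp only [map_add, map_sub, ← Int.cast_smul_eq_zsmul ℤ, Int.cast_id, map_smul,
        smul_eq_mul]
      simp only [Int.cast_id, smul_eq_mul]
      rw [skew z x]
      linear_combination -h1
    have h0 : h - B x h • y + B y h • x = 0 := by
      refine (Module.Basis.forall_coord_eq_zero_iff e).mp fun m => ?_
      rcases m with j | j
      · rw [Module.Basis.coord_apply, cl, skew, hzero (e (Sum.inr j)), neg_zero]
      · rw [Module.Basis.coord_apply, cr, skew, hzero (e (Sum.inl j)), neg_zero, neg_zero]
    rcases Nat.lt_or_ge g 2 with hg1 | hg2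
    · -- the case g = 1 : here iH h = 0
      have hgeq : g = 1 := by omega
      subst hgeq
      have hiH0 : iH h = 0 := by
        rw [hiH, hω, Fin.sum_univ_one]
        have hexp := EXP h
        simp only [Fin.sum_univ_one] at hexp
        rw [hexp]
        rw [map_sub, map_zsmul, map_zsmul, sub_mul, smul_mul_assoc, smul_mul_assoc]
        have t1 : ι ℤ (e (Sum.inl 0)) * (ι ℤ (e (Sum.inl 0)) * ι ℤ (e (Sum.inr 0))) = 0 := by
          rw [← mul_assoc, ι_sq_zero, zero_mul]
        have t2 : ι ℤ (e (Sum.inr 0)) * (ι ℤ (e (Sum.inl 0)) * ι ℤ (e (Sum.inr 0))) = 0 := by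
          have := anti (e (Sum.inr 0)) (e (Sum.inl 0))
          have h3 : ι ℤ (e (Sum.inr 0)) * ι ℤ (e (Sum.inl 0))
              = -(ι ℤ (e (Sum.inl 0)) * ι ℤ (e (Sum.inr 0))) :=
            eq_neg_of_add_eq_zero_left this
          rw [← mul_assoc, h3, neg_mul, mul_assoc, ι_sq_zero, mul_zero, neg_zero]
        rw [t1, t2]
        simp
      rw [hiH0]
      exact Submodule.zero_mem _
    · -- the case g ≥ 2 : B x h = 0 and h is a multiple of x
      have hBxh : B x h = 0 := by
        have h1 := hmu h hts
        have h2 : ((g : ℤ) - 1) * B x h = 0 := by linear_combination h1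
        rcases mul_eq_zero.mp h2 with h3 | h3
        · exfalso
          have : (2 : ℤ) ≤ (g : ℤ) := by exact_mod_cast hg2
          linarith
        · exact h3
      refine Submodule.mem_span_singleton.mpr ⟨-(B y h), ?_⟩
      rw [← LinearMap.map_smul iH]
      congr 1
      rw [hBxh] at h0
      simp only [zero_smul, sub_zero] at h0
      simp only [← Int.cast_smul_eq_zsmul ℤ, Int.cast_id] at h0 ⊢
      rw [neg_smul]
      exact (eq_neg_of_add_eq_zero_left h0).symm
  · -- span {iH x} is contained in the intersection
    rw [Submodule.span_le, Set.singleton_subset_iff]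
    refine Submodule.mem_inf.mpr ⟨?_, ⟨x, rfl⟩⟩
    have hterm : ∀ i : Fin g,
        ι ℤ x * ι ℤ (e (Sum.inl i) - B x (e (Sum.inl i)) • y)
          * ι ℤ (e (Sum.inr i) - B x (e (Sum.inr i)) • y)
        = ι ℤ x * ι ℤ (e (Sum.inl i)) * ι ℤ (e (Sum.inr i))
          + (ι ℤ x * ι ℤ y) * (B x (e (Sum.inr i)) • ι ℤ (e (Sum.inl i))
              - B x (e (Sum.inl i)) • ι ℤ (e (Sum.inr i))) := by
      intro i
      rw [map_sub, map_sub, map_zsmul, map_zsmul]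
      exact key2 _ _ _ _ (anti _ _) (ι_sq_zero y) _ _
    have hsum : iH x = ∑ i, ι ℤ x * ι ℤ (e (Sum.inl i) - B x (e (Sum.inl i)) • y)
        * ι ℤ (e (Sum.inr i) - B x (e (Sum.inr i)) • y) := by
      rw [Finset.sum_congr rfl fun i _ => hterm i, Finset.sum_add_distrib, ← Finset.mul_sum]
      have hx2 : ∑ i, (B x (e (Sum.inr i)) • ι ℤ (e (Sum.inl i))
          - B x (e (Sum.inl i)) • ι ℤ (e (Sum.inr i))) = ι ℤ x := by
        have := congrArg (ι ℤ) (EXP x)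
        rw [map_sub, map_sum, map_sum] at this
        simp only [map_zsmul] at this
        rw [Finset.sum_sub_distrib]
        exact this.symm
      rw [hx2]
      have hxyx : (ι ℤ x * ι ℤ y) * ι ℤ x = 0 := by
        have h3 : ι ℤ y * ι ℤ x = -(ι ℤ x * ι ℤ y) :=
          eq_neg_of_add_eq_zero_left (anti y x)
        rw [mul_assoc, h3, mul_neg, ← mul_assoc, ι_sq_zero, zero_mul, neg_zero]
      rw [hxyx, add_zero, hiH, hω, Finset.mul_sum]
      exact Finset.sum_congr rfl fun i _ => (mul_assoc _ _ _).symm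
    rw [hsum]
    refine Submodule.sum_mem _ fun i _ => Submodule.subset_span ?_
    refine ⟨x, _, _, hBalt x, ?_, ?_, rfl⟩
    · simp only [map_sub, ← Int.cast_smul_eq_zsmul ℤ, Int.cast_id, map_smul, smul_eq_mul,
        hxy]
      simp only [Int.cast_id, smul_eq_mul]
      ring
    · simp only [map_sub, ← Int.cast_smul_eq_zsmul ℤ, Int.cast_id, map_smul, smul_eq_mul,
        hxy]
      simp only [Int.cast_id, smul_eq_mul]
      ring
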